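/- Let τ be a smooth binary relation on words over an alphabet Σ, fix a language M, and let L ⊆ M be a τ-independent language. For every i ≥ 1, writing D_j = μ^j(L) \ μ^{j-1}(L): σ_{μ^{i-1}(L)}^{≥2}(μ^i(L)) = σ_{μ^{i-1}(L)}^{≥2}(D_i) and σ_{μ^{i-1}(L)}^{≥2}(D_i) ⊆ σ_L^{≥2i}(D_1). -/
import Mathlib


open Set

/-- Image of a language under a binary word relation: τ(X) = {y | ∃ x ∈ X, τ(x,y)}. -/
def img {α : Type*} (τ : List α → List α → Prop) (X : Set (List α)) : Set (List α) :=
  {y | ∃ x ∈ X, τ x y}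

/-- Inverse image: τ⁻¹(X) = {y | ∃ x ∈ X, τ(y,x)}. -/
def pre {α : Type*} (τ : List α → List α → Prop) (X : Set (List α)) : Set (List α) :=
  {y | ∃ x ∈ X, τ y x}

/-- ind(X) = M \ (τ(X) ∪ τ⁻¹(X)). -/
def ind {α : Type*} (τ : List α → List α → Prop) (M X : Set (List α)) : Set (List α) :=
  M \ (img τ X ∪ pre τ X)

/-- The max-min operator μ(X) = ind(X) \ τ⁻¹(ind(X)). -/
def mu {α : Type*} (τ : List α → List α → Prop) (M X : Set (List α)) : Set (List α) :=
  ind τ M X \ pre τ (ind τ M X)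

/-- σ_X(A) = τ⁻¹(A) ∩ ind(X). -/
def sig {α : Type*} (τ : List α → List α → Prop) (M X A : Set (List α)) : Set (List α) :=
  pre τ A ∩ ind τ M X

/-- Φ^*(A) = ⋃_{i≥0} Φ^i(A). -/
def opStar {α : Type*} (Φ : Set (List α) → Set (List α)) (A : Set (List α)) : Set (List α) :=
  ⋃ i : ℕ, Φ^[i] A

/-- Φ^+(A) = ⋃_{i≥1} Φ^i(A). -/
def opPlus {α : Type*} (Φ : Set (List α) → Set (List α)) (A : Set (List α)) : Set (List α) :=
  ⋃ i ≥ 1, Φ^[i] A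

/-- Φ^∩(A) = ⋂_{i≥1} Φ^i(A). -/
def opInter {α : Type*} (Φ : Set (List α) → Set (List α)) (A : Set (List α)) : Set (List α) :=
  ⋂ i ≥ 1, Φ^[i] A

/-- Φ^{≥k}(A) = ⋃_{i≥k} Φ^i(A). -/
def opGe {α : Type*} (Φ : Set (List α) → Set (List α)) (k : ℕ) (A : Set (List α)) : Set (List α) :=
  ⋃ i ≥ k, Φ^[i] A

/-- A language is τ-independent if τ(L) ∩ L = ∅. -/
def indep {α : Type*} (τ : List α → List α → Prop) (L : Set (List α)) : Prop :=
  img τ L ∩ L = ∅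

/-- τ is smooth (relative to M) if σ_X^∩(ind(X)) ⊆ σ_X^*(μ(X)) for every language X. -/
def smooth {α : Type*} (τ : List α → List α → Prop) (M : Set (List α)) : Prop :=
  ∀ X : Set (List α), opInter (sig τ M X) (ind τ M X) ⊆ opStar (sig τ M X) (mu τ M X)

/-- L is P_τ-maximal relative to M: L ⊆ M, L is τ-independent, and no word of M \ L
can be added to L keeping τ-independence. -/
def maximalIndep {α : Type*} (τ : List α → List α → Prop) (M L : Set (List α)) : Prop :=
  L ⊆ M ∧ indep τ L ∧ ∀ w ∈ M \ L, ¬ indep τ (L ∪ {w})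

section aux

variable {α : Type*} {τ : List α → List α → Prop} {M : Set (List α)}

lemma img_mono' {A B : Set (List α)} (h : A ⊆ B) : img τ A ⊆ img τ B := by
  rintro y ⟨x, hx, hxy⟩; exact ⟨x, h hx, hxy⟩

lemma pre_mono' {A B : Set (List α)} (h : A ⊆ B) : pre τ A ⊆ pre τ B := by
  rintro y ⟨x, hx, hxy⟩; exact ⟨x, h hx, hxy⟩

lemma ind_anti {X Y : Set (List α)} (h : X ⊆ Y) : ind τ M Y ⊆ ind τ M X := by
  rintro w ⟨hwM, hw⟩
  refine ⟨hwM, fun hc => hw ?_⟩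
  rcases hc with hc | hc
  · exact Or.inl (img_mono' h hc)
  · exact Or.inr (pre_mono' h hc)

lemma ind_not_pre {X : Set (List α)} {w : List α} (hw : w ∈ ind τ M X) : w ∉ pre τ X :=
  fun hc => hw.2 (Or.inr hc)

lemma ind_not_img {X : Set (List α)} {w : List α} (hw : w ∈ ind τ M X) : w ∉ img τ X :=
  fun hc => hw.2 (Or.inl hc)

lemma sig_mono {X A B : Set (List α)} (h : A ⊆ B) : sig τ M X A ⊆ sig τ M X B :=
  fun _ hw => ⟨pre_mono' h hw.1, hw.2⟩

lemma sig_iter_mono {X A B : Set (List α)} (h : A ⊆ B) (n : ℕ) :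
    (sig τ M X)^[n] A ⊆ (sig τ M X)^[n] B := by
  induction n with
  | zero => exact h
  | succ n ih =>
    rw [Function.iterate_succ_apply', Function.iterate_succ_apply']
    exact sig_mono ih

lemma sig_iUnion {X : Set (List α)} {ι : Sort*} (A : ι → Set (List α)) :
    sig τ M X (⋃ j, A j) = ⋃ j, sig τ M X (A j) := by
  ext w
  simp only [sig, pre, mem_iUnion, mem_inter_iff, mem_setOf_eq, mem_iUnion]
  aesop

lemma sig_iter_iUnion {X : Set (List α)} {ι : Sort*} (A : ι → Set (List α)) (n : ℕ) :
    (sig τ M X)^[n] (⋃ j, A j) = ⋃ j, (sig τ M X)^[n] (A j) := by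
  induction n with
  | zero => simp
  | succ n ih =>
    rw [Function.iterate_succ_apply', ih, sig_iUnion,
      funext fun j => (Function.iterate_succ_apply' (sig τ M X) n (A j))]

lemma sig_union {X A B : Set (List α)} :
    sig τ M X (A ∪ B) = sig τ M X A ∪ sig τ M X B := by
  ext w
  simp only [sig, pre, mem_union, mem_inter_iff, mem_setOf_eq]
  aesop

lemma sig_iter_union {X A B : Set (List α)} (n : ℕ) :
    (sig τ M X)^[n] (A ∪ B) = (sig τ M X)^[n] A ∪ (sig τ M X)^[n] B := by
  induction n with
  | zero => rfl
  | succ n ih => rw [Function.iterate_succ_apply', ih, sig_union,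
      Function.iterate_succ_apply', Function.iterate_succ_apply']

lemma sig_of_subset {X A : Set (List α)} (h : A ⊆ X) : sig τ M X A = ∅ := by
  ext w
  simp only [sig, mem_inter_iff, mem_empty_iff_false, iff_false]
  rintro ⟨h1, h2⟩
  exact ind_not_pre h2 (pre_mono' h h1)

lemma sig_iter_empty {X : Set (List α)} (n : ℕ) : (sig τ M X)^[n] (∅ : Set (List α)) = ∅ := by
  induction n with
  | zero => rfl
  | succ n ih =>
    rw [Function.iterate_succ_apply', ih]
    ext w
    simp only [sig, pre, mem_inter_iff, mem_setOf_eq, mem_empty_iff_false, iff_false]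
    rintro ⟨⟨x, hx, _⟩, _⟩
    exact hx

lemma sig_le {X Y A : Set (List α)} (h : X ⊆ Y) : sig τ M Y A ⊆ sig τ M X A :=
  fun _ hw => ⟨hw.1, ind_anti h hw.2⟩

lemma sig_le_iter {X Y A : Set (List α)} (h : X ⊆ Y) (n : ℕ) :
    (sig τ M Y)^[n] A ⊆ (sig τ M X)^[n] A := by
  induction n with
  | zero => exact subset_rfl
  | succ n ih =>
    rw [Function.iterate_succ_apply', Function.iterate_succ_apply']
    exact (sig_mono ih).trans (sig_le h)

lemma mem_opGe {Φ : Set (List α) → Set (List α)} {k : ℕ} {A : Set (List α)} {w : List α} :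
    w ∈ opGe Φ k A ↔ ∃ j, k ≤ j ∧ w ∈ Φ^[j] A := by
  simp [opGe]

lemma mu_subset_ind {X : Set (List α)} : mu τ M X ⊆ ind τ M X := diff_subset

lemma mu_subset_M {X : Set (List α)} : mu τ M X ⊆ M := fun _ hw => hw.1.1

lemma indep_subset_mu {X : Set (List α)} (hXM : X ⊆ M) (hX : indep τ X) :
    X ⊆ mu τ M X := by
  intro w hw
  have hind : w ∈ ind τ M X := by
    refine ⟨hXM hw, fun hc => ?_⟩
    rcases hc with hc | hc
    · exact absurd (mem_inter hc hw) (by rw [hX]; exact notMem_empty w)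
    · rcases hc with ⟨x, hx, hwx⟩
      have hx2 : x ∈ img τ X ∩ X := ⟨⟨w, hw, hwx⟩, hx⟩
      rw [hX] at hx2
      exact hx2
  refine ⟨hind, fun hc => ?_⟩
  rcases hc with ⟨v, hv, hwv⟩
  exact ind_not_img hv ⟨w, hw, hwv⟩

lemma indep_mu {X : Set (List α)} : indep τ (mu τ M X) := by
  rw [indep, eq_empty_iff_forall_notMem]
  rintro y ⟨⟨x, hx, hxy⟩, hy⟩
  exact hx.2 ⟨y, mu_subset_ind hy, hxy⟩

lemma ind_subset_mu_union {X : Set (List α)} :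
    ind τ M X ⊆ mu τ M X ∪ sig τ M X (ind τ M X) := by
  intro w hw
  by_cases hp : w ∈ pre τ (ind τ M X)
  · exact Or.inr ⟨hp, hw⟩
  · exact Or.inl ⟨hw, hp⟩

end aux

section key

variable {α : Type*} {τ : List α → List α → Prop} {M : Set (List α)}

lemma key_lemma (hsm : smooth τ M) {X : Set (List α)} (hXM : X ⊆ M) (hX : indep τ X) :
    mu τ M (mu τ M X) \ mu τ M X ⊆ opGe (sig τ M X) 2 (mu τ M X \ X) := by
  intro w hw
  obtain ⟨hwY, hwnY⟩ := hw
  set Y := mu τ M X with hYdef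
  have hXY : X ⊆ Y := indep_subset_mu hXM hX
  have hwiY : w ∈ ind τ M Y := mu_subset_ind hwY
  have hwiX : w ∈ ind τ M X := ind_anti hXY hwiY
  have hwpreY : w ∉ pre τ Y := ind_not_pre hwiY
  -- w ∈ sig_X(ind X)
  have hw1 : w ∈ sig τ M X (ind τ M X) := by
    rcases ind_subset_mu_union hwiX with h | h
    · exact absurd h hwnY
    · exact h
  -- there is j ≥ 1 with w ∈ sig^[j](mu X)
  have hex : ∃ j, 1 ≤ j ∧ w ∈ (sig τ M X)^[j] (mu τ M X) := by
    by_contra hcon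
    push_neg at hcon
    have hall : ∀ n, 1 ≤ n → w ∈ (sig τ M X)^[n] (ind τ M X) := by
      intro n hn
      induction n with
      | zero => omega
      | succ n ih =>
        rcases Nat.eq_or_lt_of_le hn with h1 | h1
        · simpa [← h1] using hw1
        · have hn1 : 1 ≤ n := by omega
          have hwn := ih hn1
          have hstep : (sig τ M X)^[n] (ind τ M X) ⊆
              (sig τ M X)^[n] (mu τ M X) ∪ (sig τ M X)^[n+1] (ind τ M X) := by
            intro v hv
            have := sig_iter_mono (ind_subset_mu_union (τ := τ) (M := M) (X := X)) n hv
            rw [sig_iter_union] at this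
            rcases this with h | h
            · exact Or.inl h
            · right
              rw [Function.iterate_succ_apply]
              exact h
          rcases hstep hwn with h | h
          · exact absurd h (hcon n hn1)
          · exact h
    have hwInter : w ∈ opInter (sig τ M X) (ind τ M X) := by
      simp only [opInter, mem_iInter]
      exact fun n hn => hall n hn
    have hwStar := hsm X hwInter
    simp only [opStar, mem_iUnion] at hwStar
    obtain ⟨j, hj⟩ := hwStar
    rcases Nat.eq_zero_or_pos j with rfl | hj1
    · exact hwnY hj
    · exact hcon j hj1 hj
  obtain ⟨j, hj1, hwj⟩ := hex
  -- j ≠ 1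
  have hj2 : 2 ≤ j := by
    rcases Nat.lt_or_ge j 2 with h | h
    · interval_cases j
      · exact absurd hwj.1 hwpreY
    · exact h
  -- split mu X = (mu X \ X) ∪ X
  have hsplit : mu τ M X = (mu τ M X \ X) ∪ X := (diff_union_of_subset hXY).symm
  rw [hsplit, sig_iter_union] at hwj
  rcases hwj with h | h
  · exact mem_opGe.mpr ⟨j, hj2, h⟩
  · exfalso
    obtain ⟨j', rfl⟩ : ∃ j', j = j' + 1 := ⟨j - 1, by omega⟩
    rw [Function.iterate_succ_apply, sig_of_subset subset_rfl, sig_iter_empty] at h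
    exact h

lemma mu_facts {L : Set (List α)} (hLM : L ⊆ M) (hL : indep τ L) :
    ∀ n : ℕ, (mu τ M)^[n] L ⊆ M ∧ indep τ ((mu τ M)^[n] L) ∧ L ⊆ (mu τ M)^[n] L := by
  intro n
  induction n with
  | zero => exact ⟨hLM, hL, subset_rfl⟩
  | succ n ih =>
    rw [Function.iterate_succ_apply']
    exact ⟨mu_subset_M, indep_mu, ih.2.2.trans (indep_subset_mu ih.1 ih.2.1)⟩

lemma opGe_comp {X : Set (List α)} (a b : ℕ) (A : Set (List α)) :
    opGe (sig τ M X) a (opGe (sig τ M X) b A) ⊆ opGe (sig τ M X) (a + b) A := by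
  intro w hw
  rw [mem_opGe] at hw
  obtain ⟨j, hja, hwj⟩ := hw
  rw [opGe] at hwj
  rw [sig_iter_iUnion] at hwj
  simp only [mem_iUnion] at hwj
  obtain ⟨k, hwk⟩ := hwj
  rw [sig_iter_iUnion] at hwk
  simp only [mem_iUnion] at hwk
  obtain ⟨hkb, hwk⟩ := hwk
  rw [← Function.iterate_add_apply] at hwk
  exact mem_opGe.mpr ⟨j + k, by omega, hwk⟩

lemma claimC {L : Set (List α)} (hsm : smooth τ M) (hLM : L ⊆ M) (hL : indep τ L) :
    ∀ n : ℕ, (mu τ M)^[n+1] L \ (mu τ M)^[n] L ⊆ opGe (sig τ M L) (2*n) (mu τ M L \ L) := by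
  intro n
  induction n with
  | zero =>
    intro w hw
    exact mem_opGe.mpr ⟨0, le_rfl, by simpa using hw⟩
  | succ n ih =>
    set X := (mu τ M)^[n] L with hXdef
    obtain ⟨hXM, hXindep, hLX⟩ := mu_facts hLM hL n
    have h1 : (mu τ M)^[n+2] L \ (mu τ M)^[n+1] L ⊆ opGe (sig τ M X) 2 (mu τ M X \ X) := by
      have e1 : (mu τ M)^[n+1] L = mu τ M X := Function.iterate_succ_apply' _ _ _
      have e2 : (mu τ M)^[n+2] L = mu τ M (mu τ M X) := by
        rw [show n + 2 = (n+1) + 1 by rfl, Function.iterate_succ_apply', e1]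
      rw [e1, e2]
      exact key_lemma hsm hXM hXindep
    refine h1.trans ?_
    have h2 : opGe (sig τ M X) 2 (mu τ M X \ X) ⊆ opGe (sig τ M L) 2 (mu τ M X \ X) := by
      intro w hw
      rw [mem_opGe] at hw ⊢
      obtain ⟨j, hj, hwj⟩ := hw
      exact ⟨j, hj, sig_le_iter hLX j hwj⟩
    refine h2.trans ?_
    have h3 : (mu τ M X \ X) ⊆ opGe (sig τ M L) (2*n) (mu τ M L \ L) := by
      have e1 : (mu τ M)^[n+1] L = mu τ M X := Function.iterate_succ_apply' _ _ _
      rw [← e1]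
      exact ih
    have h4 : opGe (sig τ M L) 2 (mu τ M X \ X) ⊆
        opGe (sig τ M L) 2 (opGe (sig τ M L) (2*n) (mu τ M L \ L)) := by
      intro w hw
      rw [mem_opGe] at hw ⊢
      obtain ⟨j, hj, hwj⟩ := hw
      exact ⟨j, hj, sig_iter_mono h3 j hwj⟩
    refine h4.trans ?_
    rw [show 2*(n+1) = 2 + 2*n by ring]
    exact opGe_comp 2 (2*n) _

end key


theorem stmt11 {α : Type*} (τ : List α → List α → Prop) (M L : Set (List α))
    (hsm : smooth τ M) (hLM : L ⊆ M) (hL : indep τ L)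
    (i : ℕ) (hi : 1 ≤ i) :
    opGe (sig τ M ((mu τ M)^[i-1] L)) 2 ((mu τ M)^[i] L) =
      opGe (sig τ M ((mu τ M)^[i-1] L)) 2 ((mu τ M)^[i] L \ (mu τ M)^[i-1] L) ∧
    opGe (sig τ M ((mu τ M)^[i-1] L)) 2 ((mu τ M)^[i] L \ (mu τ M)^[i-1] L) ⊆
      opGe (sig τ M L) (2*i) (mu τ M L \ L) := by
  set X := (mu τ M)^[i-1] L with hXdef
  obtain ⟨hXM, hXindep, hLX⟩ := mu_facts hLM hL (i-1)
  have ei : (mu τ M)^[i] L = mu τ M X := by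
    rw [show i = (i-1) + 1 by omega, Function.iterate_succ_apply']
  have hXsub : X ⊆ (mu τ M)^[i] L := by rw [ei]; exact indep_subset_mu hXM hXindep
  constructor
  · apply Subset.antisymm
    · intro w hw
      rw [mem_opGe] at hw ⊢
      obtain ⟨j, hj, hwj⟩ := hw
      rw [show (mu τ M)^[i] L = ((mu τ M)^[i] L \ X) ∪ X from
        (diff_union_of_subset hXsub).symm, sig_iter_union] at hwj
      rcases hwj with h | h
      · exact ⟨j, hj, h⟩
      · exfalso
        obtain ⟨j', rfl⟩ : ∃ j', j = j' + 1 := ⟨j - 1, by omega⟩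
        rw [Function.iterate_succ_apply, sig_of_subset subset_rfl, sig_iter_empty] at h
        exact h
    · intro w hw
      rw [mem_opGe] at hw ⊢
      obtain ⟨j, hj, hwj⟩ := hw
      exact ⟨j, hj, sig_iter_mono diff_subset j hwj⟩
  · have hD : (mu τ M)^[i] L \ X ⊆ opGe (sig τ M L) (2*(i-1)) (mu τ M L \ L) := by
      have := claimC hsm hLM hL (i-1)
      rwa [show (i-1) + 1 = i by omega] at this
    intro w hw
    rw [mem_opGe] at hw
    obtain ⟨j, hj, hwj⟩ := hw
    have h1 : w ∈ (sig τ M L)^[j] ((mu τ M)^[i] L \ X) := sig_le_iter hLX j hwj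
    have h2 : w ∈ (sig τ M L)^[j] (opGe (sig τ M L) (2*(i-1)) (mu τ M L \ L)) :=
      sig_iter_mono hD j h1
    have h3 : w ∈ opGe (sig τ M L) (2 + 2*(i-1)) (mu τ M L \ L) :=
      opGe_comp 2 (2*(i-1)) _ (mem_opGe.mpr ⟨j, hj, h2⟩)
    rwa [show 2 + 2*(i-1) = 2*i by omega] at h3
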